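/- For unit vectors q, q_d in S² with q·q_d > -1, the error function Ψ = 2 - √2·√(1 + q·q_d) and the error vector e_q = (q_d × q)/(√2·√(1 + q·q_d)) satisfy the locally quadratic bounds ‖e_q‖² ≤ Ψ ≤ 2‖e_q‖². -/

import Mathlib

open scoped RealInnerProductSpace

noncomputable def cross3 (a b : EuclideanSpace ℝ (Fin 3)) : EuclideanSpace ℝ (Fin 3) :=
  (WithLp.equiv 2 (Fin 3 → ℝ)).symm
    (crossProduct ((WithLp.equiv 2 (Fin 3 → ℝ)) a) ((WithLp.equiv 2 (Fin 3 → ℝ)) b))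

lemma inner_eq_dot (a b : EuclideanSpace ℝ (Fin 3)) :
    ⟪a, b⟫ = dotProduct (WithLp.equiv 2 (Fin 3 → ℝ) a) (WithLp.equiv 2 (Fin 3 → ℝ) b) := by
  simp [PiLp.inner_apply, dotProduct, mul_comm]

lemma norm_cross3_sq (a b : EuclideanSpace ℝ (Fin 3)) :
    ‖cross3 a b‖ ^ 2 = ⟪a, a⟫ * ⟪b, b⟫ - ⟪a, b⟫ ^ 2 := by
  rw [← real_inner_self_eq_norm_sq]
  rw [inner_eq_dot, inner_eq_dot, inner_eq_dot, inner_eq_dot]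
  simp only [cross3, Equiv.apply_symm_apply]
  rw [cross_dot_cross, sq,
    dotProduct_comm ((WithLp.equiv 2 (Fin 3 → ℝ)) b) ((WithLp.equiv 2 (Fin 3 → ℝ)) a)]

theorem stmt3 (q qd : EuclideanSpace ℝ (Fin 3)) (hq : ‖q‖ = 1) (hqd : ‖qd‖ = 1)
    (h : -1 < ⟪q, qd⟫) :
    ‖(Real.sqrt 2 * Real.sqrt (1 + ⟪q, qd⟫))⁻¹ • cross3 qd q‖ ^ 2 ≤
        2 - Real.sqrt 2 * Real.sqrt (1 + ⟪q, qd⟫) ∧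
      2 - Real.sqrt 2 * Real.sqrt (1 + ⟪q, qd⟫) ≤
        2 * ‖(Real.sqrt 2 * Real.sqrt (1 + ⟪q, qd⟫))⁻¹ • cross3 qd q‖ ^ 2 := by
  set c := ⟪q, qd⟫ with hc
  have hc1 : (0:ℝ) < 1 + c := by linarith
  have hcle : c ≤ 1 := by
    have := real_inner_le_norm q qd
    rw [hq, hqd] at this; simpa using this
  set s := Real.sqrt (1 + c) with hsdef
  have hs0 : 0 < s := Real.sqrt_pos.mpr hc1
  have hs2 : s ^ 2 = 1 + c := Real.sq_sqrt hc1.le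
  have h20 : (0:ℝ) < Real.sqrt 2 := Real.sqrt_pos.mpr (by norm_num)
  have h22 : Real.sqrt 2 ^ 2 = 2 := Real.sq_sqrt (by norm_num)
  have hsle : s ≤ Real.sqrt 2 := Real.sqrt_le_sqrt (by linarith)
  have hqq : ⟪q, q⟫ = 1 := by rw [real_inner_self_eq_norm_sq, hq]; norm_num
  have hdd : ⟪qd, qd⟫ = 1 := by rw [real_inner_self_eq_norm_sq, hqd]; norm_num
  have hdq : ⟪qd, q⟫ = c := by rw [real_inner_comm]
  have hcr : ‖cross3 qd q‖ ^ 2 = 1 - c ^ 2 := by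
    rw [norm_cross3_sq, hqq, hdd, hdq]; ring
  have hpos : (0:ℝ) < Real.sqrt 2 * s := mul_pos h20 hs0
  have hnorm : ‖(Real.sqrt 2 * s)⁻¹ • cross3 qd q‖ ^ 2 = (1 - c) / 2 := by
    rw [norm_smul, mul_pow, hcr, Real.norm_eq_abs, abs_of_pos (inv_pos.mpr hpos)]
    rw [inv_pow, mul_pow, h22, hs2]
    have h1c2 : (1:ℝ) - c ^ 2 = (1 + c) * (1 - c) := by ring
    rw [h1c2]
    field_simp
  rw [hnorm]
  constructor
  · nlinarith [sq_nonneg (s - Real.sqrt 2)]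
  · nlinarith [mul_le_mul_of_nonneg_left hsle hs0.le]
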